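/- arXiv:0711.1229 — 2 statements merged into one kernel-verified Lean document; each statement's English description precedes it below -/
import Mathlib

section
/- Let p ∈ S², 0 < ε < π/2, a ∈ S², b a unit tangent vector at a, and ℓ > 0, and suppose ρ(p, γ_{a,b}(t)) ≤ ε for all t ∈ [0,ℓ]. Then ∫₀^ℓ δ^ε_p(γ_{a,b}(t)) dt ≤ 2·∫₀^ε exp(1/ε)·exp(1/(s − ε)) ds (the right-hand side being the integral of δ^ε_p over any diameter of the geodesic ball B(p,ε)), with equality if and only if ℓ = 2ε, i.e., if and only if the arc is itself a diameter of B(p,ε). -/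
open scoped RealInnerProductSpace
open Real

noncomputable section

/-- Euclidean 3-space. -/
abbrev E3 : Type := EuclideanSpace ℝ (Fin 3)

/-- The unit sphere S² in ℝ³. -/
def sphere2 : Set E3 := {x : E3 | ‖x‖ = 1}

/-- The round (geodesic) distance ρ(p,q) = arccos⟨p,q⟩ on S². -/
def rho (p q : E3) : ℝ := Real.arccos ⟪p, q⟫

/-- `UnitTangent p v` : `v` is a unit tangent vector at `p`. -/
def UnitTangent (p v : E3) : Prop := ‖v‖ = 1 ∧ ⟪p, v⟫ = 0

/-- The unit-speed great-circle arc γ_{p,v}(t) = (cos t)·p + (sin t)·v. -/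
def geo (p v : E3) (t : ℝ) : E3 := (Real.cos t) • p + (Real.sin t) • v
/-- The bump function `δ^ε_p`, supported in the geodesic ball `B(p,ε)`:
`δ^ε_p(q) = exp(1/ε)·exp(1/(ρ(p,q) − ε))` for `ρ(p,q) < ε`, and `0` otherwise. -/
def deltaFn (p : E3) (ε : ℝ) (q : E3) : ℝ :=
  if rho p q < ε then Real.exp (1 / ε) * Real.exp (1 / (rho p q - ε)) else 0
lemma my_arccos_anti {x y : ℝ} (h : x ≤ y) : Real.arccos y ≤ Real.arccos x := by
  unfold Real.arccos
  have := Real.monotone_arcsin h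
  linarith

/-- the model bump profile -/
def Dfun (ε : ℝ) (s : ℝ) : ℝ :=
  if s < ε then Real.exp (1 / ε) * Real.exp (1 / (s - ε)) else 0

lemma Dfun_nonneg (ε s : ℝ) : 0 ≤ Dfun ε s := by
  unfold Dfun; split <;> positivity

lemma Dfun_le (ε s : ℝ) : Dfun ε s ≤ Real.exp (1 / ε) := by
  unfold Dfun
  split
  · rename_i h
    have h1 : 1 / (s - ε) ≤ 0 := by
      apply div_nonpos_of_nonneg_of_nonpos (by norm_num)
      linarith
    calc Real.exp (1 / ε) * Real.exp (1 / (s - ε)) ≤ Real.exp (1 / ε) * 1 := by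
          apply mul_le_mul_of_nonneg_left _ (Real.exp_nonneg _)
          simpa using Real.exp_le_one_iff.mpr h1
      _ = Real.exp (1 / ε) := by ring
  · positivity

lemma Dfun_anti (ε : ℝ) {s₁ s₂ : ℝ} (h : s₁ ≤ s₂) : Dfun ε s₂ ≤ Dfun ε s₁ := by
  unfold Dfun
  by_cases h2 : s₂ < ε
  · have h1 : s₁ < ε := lt_of_le_of_lt h h2
    rw [if_pos h2, if_pos h1]
    apply mul_le_mul_of_nonneg_left _ (Real.exp_nonneg _)
    apply Real.exp_le_exp.mpr
    exact one_div_le_one_div_of_neg_of_le (by linarith) (by linarith)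
  · rw [if_neg h2]
    split
    · positivity
    · exact le_refl _
    
lemma Dfun_pos (ε : ℝ) {s : ℝ} (h : s < ε) : 0 < Dfun ε s := by
  unfold Dfun; rw [if_pos h]; positivity

lemma Dfun_measurable (ε : ℝ) : Measurable (Dfun ε) := by
  unfold Dfun
  apply Measurable.ite (measurableSet_lt measurable_id measurable_const)
  · exact (measurable_const.mul ((measurable_const.div (measurable_id.sub measurable_const)).exp))
  · exact measurable_const

lemma Dfun_intervalIntegrable (ε : ℝ) {g : ℝ → ℝ} (hg : Continuous g) (u v : ℝ) :
    IntervalIntegrable (fun t => Dfun ε (g t)) MeasureTheory.volume u v := by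
  apply IntervalIntegrable.mono_fun (intervalIntegrable_const (c := Real.exp (1 / ε)))
  · exact ((Dfun_measurable ε).comp hg.measurable).aestronglyMeasurable
  · apply Filter.Eventually.of_forall
    intro x
    simp only [Real.norm_eq_abs]
    rw [abs_of_nonneg (Dfun_nonneg _ _), abs_of_nonneg (Real.exp_nonneg _)]
    exact Dfun_le ε _ 


set_option maxHeartbeats 1000000 in
/-- The integral of `δ^ε_p` over a geodesic arc contained in the closed ball
`B(p,ε)` is at most its integral over a diameter of `B(p,ε)`, with equality if
and only if the arc is itself a diameter (i.e. has length `2ε`). -/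
theorem deltaFn_integral_le_diameter
    (p : E3) (hp : p ∈ sphere2) (ε : ℝ) (hε : 0 < ε) (hε' : ε < π / 2)
    (a b : E3) (ha : a ∈ sphere2) (hb : UnitTangent a b)
    (ℓ : ℝ) (hℓ : 0 < ℓ)
    (hin : ∀ t ∈ Set.Icc (0:ℝ) ℓ, rho p (geo a b t) ≤ ε) :
    (∫ t in (0:ℝ)..ℓ, deltaFn p ε (geo a b t)) ≤
        2 * ∫ s in (0:ℝ)..ε, Real.exp (1 / ε) * Real.exp (1 / (s - ε)) ∧
      ((∫ t in (0:ℝ)..ℓ, deltaFn p ε (geo a b t)) =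
          2 * ∫ s in (0:ℝ)..ε, Real.exp (1 / ε) * Real.exp (1 / (s - ε)) ↔
        ℓ = 2 * ε) := by
  have hpn : ‖p‖ = 1 := hp
  have han : ‖a‖ = 1 := ha
  have hbn : ‖b‖ = 1 := hb.1
  have hab : ⟪a, b⟫ = 0 := hb.2
  set A : ℝ := ⟪p, a⟫ with hAdef
  set B : ℝ := ⟪p, b⟫ with hBdef
  have hπ : 0 < π := Real.pi_pos
  have hA1 : |A| ≤ 1 := by
    have := abs_real_inner_le_norm p a
    rwa [hpn, han, one_mul] at this
  have hcosε : 0 < Real.cos ε := Real.cos_pos_of_mem_Ioo ⟨by linarith, hε'⟩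
  -- inner product along the geodesic
  have hinner0 : ∀ t : ℝ, ⟪p, geo a b t⟫ = A * Real.cos t + B * Real.sin t := by
    intro t
    simp only [geo, inner_add_right, real_inner_smul_right]
    ring
  -- A ≥ cos ε
  have hgeo0 : geo a b 0 = a := by simp [geo]
  have hA : Real.cos ε ≤ A := by
    have h0 := hin 0 ⟨le_refl _, hℓ.le⟩
    rw [hgeo0] at h0
    have : Real.cos (rho p a) = A := Real.cos_arccos (by cases abs_le.mp hA1; linarith) (by cases abs_le.mp hA1; linarith)
    rw [← this]
    exact Real.cos_le_cos_of_nonneg_of_le_pi (Real.arccos_nonneg _) (by linarith) h0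
  have hApos : 0 < A := lt_of_lt_of_le hcosε hA
  -- R ≤ 1 via Bessel / Cauchy-Schwarz
  have hba : ⟪b, a⟫ = (0:ℝ) := by rw [real_inner_comm]; exact hab
  have hS : A ^ 2 + B ^ 2 ≤ 1 := by
    set q : E3 := A • a + B • b with hq
    have h1 : ⟪p, q⟫ = A ^ 2 + B ^ 2 := by
      simp only [hq, inner_add_right, real_inner_smul_right]
      ring
    have h2 : ‖q‖ ^ 2 = A ^ 2 + B ^ 2 := by
      rw [← real_inner_self_eq_norm_sq]
      simp only [hq, inner_add_right, inner_add_left, real_inner_smul_right,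
        real_inner_smul_left, real_inner_self_eq_norm_sq, han, hbn,
        hba, hab, norm_smul, Real.norm_eq_abs, mul_one]
      simp only [mul_pow, sq_abs, han, hbn]
      ring
    have h3 : ⟪p, q⟫ ≤ ‖q‖ := by
      have := real_inner_le_norm p q
      rwa [hpn, one_mul] at this
    nlinarith [norm_nonneg q]
  set R : ℝ := Real.sqrt (A ^ 2 + B ^ 2) with hRdef
  have hR1 : R ≤ 1 := Real.sqrt_le_one.mpr hS
  have hRpos : 0 < R := Real.sqrt_pos.mpr (by nlinarith)
  have hRA : A ≤ R := by
    have : A = Real.sqrt (A ^ 2) := (Real.sqrt_sq hApos.le).symm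
    rw [this]
    exact Real.sqrt_le_sqrt (by nlinarith)
  set φ : ℝ := Real.arctan (B / A) with hφdef
  have hφ2 : -(π / 2) < φ := Real.neg_pi_div_two_lt_arctan _
  have hφ2' : φ < π / 2 := Real.arctan_lt_pi_div_two _
  have hsq : Real.sqrt (1 + (B / A) ^ 2) = R / A := by
    have h1 : 1 + (B / A) ^ 2 = (A ^ 2 + B ^ 2) / A ^ 2 := by
      field_simp
    rw [h1, Real.sqrt_div (by positivity), Real.sqrt_sq hApos.le]
  have hφcos : Real.cos φ = A / R := by
    rw [hφdef, Real.cos_arctan, hsq]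
    field_simp
  have hφsin : Real.sin φ = B / R := by
    rw [hφdef, Real.sin_arctan, hsq]
    field_simp
  have hRcos : ∀ t : ℝ, ⟪p, geo a b t⟫ = R * Real.cos (t - φ) := by
    intro t
    rw [hinner0, Real.cos_sub, hφcos, hφsin]
    field_simp
  have hrho : ∀ t : ℝ, rho p (geo a b t) = Real.arccos (R * Real.cos (t - φ)) := by
    intro t; rw [rho, hRcos]
  have hRc1 : ∀ t : ℝ, |R * Real.cos (t - φ)| ≤ 1 := by
    intro t
    rw [abs_mul, abs_of_pos hRpos]
    calc R * |Real.cos (t - φ)| ≤ 1 * 1 := by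
          apply mul_le_mul hR1 (Real.abs_cos_le_one _) (abs_nonneg _) zero_le_one
      _ = 1 := by ring
  -- cos ε ≤ R cos(t-φ) on [0,ℓ]
  have hcos_ge : ∀ t ∈ Set.Icc (0:ℝ) ℓ, Real.cos ε ≤ R * Real.cos (t - φ) := by
    intro t ht
    have h0 := hin t ht
    rw [hrho] at h0
    have hb1 := abs_le.mp (hRc1 t)
    have : Real.cos (Real.arccos (R * Real.cos (t - φ))) = R * Real.cos (t - φ) :=
      Real.cos_arccos hb1.1 hb1.2
    rw [← this]
    exact Real.cos_le_cos_of_nonneg_of_le_pi (Real.arccos_nonneg _) (by linarith) h0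
  have hcos_ge' : ∀ t ∈ Set.Icc (0:ℝ) ℓ, Real.cos ε ≤ Real.cos (t - φ) := by
    intro t ht
    have h1 := hcos_ge t ht
    nlinarith [Real.abs_cos_le_one (t - φ), abs_nonneg (Real.cos (t - φ))]
  -- the arc stays within ε of the phase: |t - φ| ≤ ε
  have hbound : ∀ t ∈ Set.Icc (0:ℝ) ℓ, |t - φ| ≤ ε := by
    intro t ht
    have hlt : t - φ < π / 2 := by
      by_contra hcon
      push_neg at hcon
      have hmem : (φ + π / 2) ∈ Set.Icc (0:ℝ) ℓ := by
        constructor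
        · linarith
        · have := ht.2; linarith
      have := hcos_ge' _ hmem
      rw [show φ + π / 2 - φ = π / 2 by ring, Real.cos_pi_div_two] at this
      linarith
    have hgt : -(π / 2) < t - φ := by
      have := ht.1; linarith
    have habs : |t - φ| < π / 2 := abs_lt.mpr ⟨hgt, hlt⟩
    by_contra hcon
    push_neg at hcon
    have hcc : Real.cos (|t - φ|) < Real.cos ε := by
      apply Real.strictAntiOn_cos ⟨hε.le, by linarith⟩ ⟨abs_nonneg _, by linarith⟩ hcon
    rw [Real.cos_abs] at hcc
    have := hcos_ge' t ht
    linarith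
  have hφle : φ ≤ ε ∧ -ε ≤ φ := by
    have := hbound 0 ⟨le_refl _, hℓ.le⟩
    rw [zero_sub, abs_neg] at this
    exact ⟨(abs_le.mp this).2, (abs_le.mp this).1⟩
  have hℓφ : ℓ - φ ≤ ε := by
    have := hbound ℓ ⟨hℓ.le, le_refl _⟩
    exact (abs_le.mp this).2
  have hℓ2ε : ℓ ≤ 2 * ε := by linarith [hφle.1]
  -- rho ≥ |t - φ|
  have hrho_ge : ∀ t ∈ Set.Icc (0:ℝ) ℓ, |t - φ| ≤ Real.arccos (R * Real.cos (t - φ)) := by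
    intro t ht
    have h1 : R * Real.cos (t - φ) ≤ Real.cos (t - φ) := by
      have hc := hcos_ge' t ht
      nlinarith
    have h2 : Real.arccos (Real.cos (t - φ)) ≤ Real.arccos (R * Real.cos (t - φ)) :=
      my_arccos_anti h1
    have h3 : Real.arccos (Real.cos (t - φ)) = |t - φ| := by
      rw [← Real.cos_abs]
      exact Real.arccos_cos (abs_nonneg _) (by have := hbound t ht; linarith)
    linarith
  -- continuity / integrability
  have hGcont : Continuous fun t : ℝ => Real.arccos (R * Real.cos (t - φ)) :=
    Real.continuous_arccos.comp
      (continuous_const.mul (Real.continuous_cos.comp (continuous_id.sub continuous_const)))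
  have hFcont : Continuous fun t : ℝ => |t - φ| := (continuous_id.sub continuous_const).abs
  have hGint : ∀ u v : ℝ, IntervalIntegrable
      (fun t => Dfun ε (Real.arccos (R * Real.cos (t - φ)))) MeasureTheory.volume u v :=
    fun u v => Dfun_intervalIntegrable ε hGcont u v
  have hFint : ∀ u v : ℝ, IntervalIntegrable
      (fun t => Dfun ε (|t - φ|)) MeasureTheory.volume u v :=
    fun u v => Dfun_intervalIntegrable ε hFcont u v
  -- step 1 : the integrand is Dfun of arccos
  have h1 : (∫ t in (0:ℝ)..ℓ, deltaFn p ε (geo a b t))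
      = ∫ t in (0:ℝ)..ℓ, Dfun ε (Real.arccos (R * Real.cos (t - φ))) := by
    apply intervalIntegral.integral_congr
    intro t _
    show deltaFn p ε (geo a b t) = Dfun ε (Real.arccos (R * Real.cos (t - φ)))
    have hd : deltaFn p ε (geo a b t) = Dfun ε (rho p (geo a b t)) := rfl
    rw [hd, hrho t]
  -- step 2 : compare with the symmetric profile
  have h2 : (∫ t in (0:ℝ)..ℓ, Dfun ε (Real.arccos (R * Real.cos (t - φ))))
      ≤ ∫ t in (0:ℝ)..ℓ, Dfun ε (|t - φ|) :=
    intervalIntegral.integral_mono_on hℓ.le (hGint 0 ℓ) (hFint 0 ℓ)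
      (fun t ht => Dfun_anti ε (hrho_ge t ht))
  -- step 3 : split the diameter interval
  have hφε0 : φ - ε ≤ 0 := by linarith [hφle.1]
  have hℓφε : ℓ ≤ φ + ε := by linarith [hℓφ]
  have hsplit : (∫ t in (φ-ε)..(0:ℝ), Dfun ε (|t - φ|))
      + (∫ t in (0:ℝ)..ℓ, Dfun ε (|t - φ|))
      + (∫ t in ℓ..(φ+ε), Dfun ε (|t - φ|))
      = ∫ t in (φ-ε)..(φ+ε), Dfun ε (|t - φ|) := by
    rw [intervalIntegral.integral_add_adjacent_intervals (hFint _ _) (hFint _ _)]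
    exact intervalIntegral.integral_add_adjacent_intervals (hFint _ _) (hFint _ _)
  have hpos1 : 0 ≤ ∫ t in (φ-ε)..(0:ℝ), Dfun ε (|t - φ|) :=
    intervalIntegral.integral_nonneg hφε0 (fun u _ => Dfun_nonneg _ _)
  have hpos2 : 0 ≤ ∫ t in ℓ..(φ+ε), Dfun ε (|t - φ|) :=
    intervalIntegral.integral_nonneg hℓφε (fun u _ => Dfun_nonneg _ _)
  -- step 4 : the diameter integral equals 2 ∫₀^ε Dfun
  have e1 : (∫ t in (φ-ε)..(φ+ε), Dfun ε (|t - φ|))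
      = ∫ s in (-ε)..ε, Dfun ε (|s|) := by
    have h := intervalIntegral.integral_comp_sub_right
      (a := φ - ε) (b := φ + ε) (fun s => Dfun ε (|s|)) φ
    simpa using h
  have e2 : (∫ s in (-ε)..(0:ℝ), Dfun ε (|s|)) = ∫ s in (0:ℝ)..ε, Dfun ε (|s|) := by
    have h := intervalIntegral.integral_comp_neg (a := (0:ℝ)) (b := ε) (fun s => Dfun ε (|s|))
    simp only [abs_neg, neg_zero] at h
    exact h.symm
  have e3 : (∫ s in (0:ℝ)..ε, Dfun ε (|s|)) = ∫ s in (0:ℝ)..ε, Dfun ε s := by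
    apply intervalIntegral.integral_congr
    intro s hs
    rw [Set.uIcc_of_le hε.le] at hs
    show Dfun ε |s| = Dfun ε s
    rw [abs_of_nonneg hs.1]
  have e4 : (∫ s in (-ε)..ε, Dfun ε (|s|))
      = (∫ s in (-ε)..(0:ℝ), Dfun ε (|s|)) + ∫ s in (0:ℝ)..ε, Dfun ε (|s|) :=
    (intervalIntegral.integral_add_adjacent_intervals
      (Dfun_intervalIntegrable ε continuous_abs _ _)
      (Dfun_intervalIntegrable ε continuous_abs _ _)).symm
  -- step 5 : identify the right-hand side
  have e5 : (∫ s in (0:ℝ)..ε, Real.exp (1 / ε) * Real.exp (1 / (s - ε)))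
      = ∫ s in (0:ℝ)..ε, Dfun ε s := by
    apply intervalIntegral.integral_congr_ae
    have hae : ∀ᵐ s : ℝ ∂MeasureTheory.volume, s ≠ ε := by
      rw [MeasureTheory.ae_iff]
      have : {s : ℝ | ¬ s ≠ ε} = {ε} := by ext x; simp
      rw [this]
      exact Real.volume_singleton
    filter_upwards [hae] with s hs hmem
    rw [Set.uIoc_of_le hε.le] at hmem
    have hslt : s < ε := lt_of_le_of_ne hmem.2 hs
    rw [Dfun, if_pos hslt]
  have hRHS : 2 * (∫ s in (0:ℝ)..ε, Real.exp (1 / ε) * Real.exp (1 / (s - ε)))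
      = ∫ t in (φ-ε)..(φ+ε), Dfun ε (|t - φ|) := by
    rw [e5, e1, e4, e2, e3]; ring
  constructor
  · rw [h1, hRHS, ← hsplit]
    linarith
  · constructor
    · intro heq
      by_contra hne
      have hlt : ℓ < 2 * ε := lt_of_le_of_ne hℓ2ε hne
      have hgap : 0 < (∫ t in (φ-ε)..(0:ℝ), Dfun ε (|t - φ|))
          + (∫ t in ℓ..(φ+ε), Dfun ε (|t - φ|)) := by
        rcases lt_or_ge (φ - ε) 0 with hc | hc
        · have hg : 0 < ∫ t in (φ-ε)..(0:ℝ), Dfun ε (|t - φ|) := by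
            apply intervalIntegral.intervalIntegral_pos_of_pos_on (hFint _ _) _ hc
            intro x hx
            apply Dfun_pos
            rw [abs_lt]
            exact ⟨by linarith [hx.1], by linarith [hx.2, hφle.2]⟩
          linarith
        · have hc' : ℓ < φ + ε := by linarith
          have hg : 0 < ∫ t in ℓ..(φ+ε), Dfun ε (|t - φ|) := by
            apply intervalIntegral.intervalIntegral_pos_of_pos_on (hFint _ _) _ hc'
            intro x hx
            apply Dfun_pos
            rw [abs_lt]
            exact ⟨by linarith [hx.1, hℓφ], by linarith [hx.2]⟩
          linarith
      rw [h1, hRHS, ← hsplit] at heq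
      linarith
    · intro hl2
      have hφεeq : φ = ε := by
        have h1' := hφle.1
        have h2' := hℓφ
        linarith
      have hR : R = 1 := by
        have h0 := hRcos 0
        rw [hgeo0] at h0
        rw [hφεeq] at h0
        rw [zero_sub, Real.cos_neg] at h0
        have hA' : A = R * Real.cos ε := h0
        have h1R : 1 * Real.cos ε ≤ R * Real.cos ε := by rw [one_mul]; linarith
        have : 1 ≤ R := le_of_mul_le_mul_right h1R hcosε
        linarith
      have hptw : Set.EqOn (fun t => deltaFn p ε (geo a b t)) (fun t => Dfun ε (|t - φ|))
          (Set.uIcc (0:ℝ) ℓ) := by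
        intro t ht
        rw [Set.uIcc_of_le hℓ.le] at ht
        have h3 : Real.arccos (R * Real.cos (t - φ)) = |t - φ| := by
          rw [hR, one_mul, ← Real.cos_abs]
          apply Real.arccos_cos (abs_nonneg _)
          rw [hφεeq, abs_le]
          constructor
          · linarith [ht.1, hε'.le, hπ]
          · have := ht.2
            rw [hl2] at this
            linarith
        show deltaFn p ε (geo a b t) = Dfun ε (|t - φ|)
        have hd : deltaFn p ε (geo a b t) = Dfun ε (rho p (geo a b t)) := rfl
        rw [hd, hrho t, h3]
      have h1' : (∫ t in (0:ℝ)..ℓ, deltaFn p ε (geo a b t))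
          = ∫ t in (0:ℝ)..ℓ, Dfun ε (|t - φ|) := intervalIntegral.integral_congr hptw
      have hb1 : φ - ε = 0 := by rw [hφεeq]; ring
      have hb2 : φ + ε = 2 * ε := by rw [hφεeq]; ring
      rw [h1', hRHS, hb1, hb2, hl2]
end
end

section
/- Let S ⊆ S² be a fine set. Then for every p ∈ S² and every unit tangent vector u at p there exist a unit tangent vector v at p with ⟨u,v⟩ > 0 and a parameter t ∈ (0,π) with γ_{p,v}(t) ∈ S; that is, at every point of the sphere the set of unit tangent directions of geodesic arcs leading to points of S is Y-like. -/
open scoped RealInnerProductSpace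
open Real

noncomputable section

open Pointwise

/-- A great circle: the intersection of S² with a two-dimensional linear
subspace of ℝ³. -/
def GreatCircle (C : Set E3) : Prop :=
  ∃ P : Submodule ℝ E3, Module.finrank ℝ P = 2 ∧ C = sphere2 ∩ (P : Set E3)

/-- A finite subset `S` of the sphere is *fine* if (1) no three distinct points
of `S` lie on a common great circle, (2) whenever three pairwise distinct great
circles, each through two distinct points of `S`, share a common point `x` of
the sphere, then `x ∈ S ∪ (-S)`, and (3) every open hemisphere contains at
least 3 points of `S`. -/
def Fine (S : Set E3) : Prop :=
  S.Finite ∧ S ⊆ sphere2 ∧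
  (∀ x ∈ S, ∀ y ∈ S, ∀ z ∈ S, x ≠ y → y ≠ z → x ≠ z →
    ∀ C : Set E3, GreatCircle C → x ∈ C → y ∈ C → z ∈ C → False) ∧
  (∀ C₁ C₂ C₃ : Set E3, GreatCircle C₁ → GreatCircle C₂ → GreatCircle C₃ →
    C₁ ≠ C₂ → C₂ ≠ C₃ → C₁ ≠ C₃ →
    (∃ a ∈ S, ∃ b ∈ S, a ≠ b ∧ a ∈ C₁ ∧ b ∈ C₁) →
    (∃ a ∈ S, ∃ b ∈ S, a ≠ b ∧ a ∈ C₂ ∧ b ∈ C₂) →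
    (∃ a ∈ S, ∃ b ∈ S, a ≠ b ∧ a ∈ C₃ ∧ b ∈ C₃) →
    ∀ x ∈ sphere2, x ∈ C₁ → x ∈ C₂ → x ∈ C₃ → x ∈ S ∪ (-S)) ∧
  (∀ n ∈ sphere2, 3 ≤ {x ∈ S | 0 < ⟪x, n⟫}.ncard)
/-- For a fine set `S`, at every point of the sphere the set of unit tangent
directions of geodesic arcs leading to points of `S` is Y-like: every open
semicircle of directions contains one. -/
theorem fine_set_directions_ylike (S : Set E3) (hS : Fine S) :
    ∀ p ∈ sphere2, ∀ u : E3, UnitTangent p u →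
      ∃ v : E3, UnitTangent p v ∧ 0 < ⟪u, v⟫ ∧ ∃ t ∈ Set.Ioo (0:ℝ) π, geo p v t ∈ S := by
  intro p hp u hu
  obtain ⟨hu1, hpu⟩ := hu
  have hp1 : ‖p‖ = 1 := hp
  obtain ⟨_, hSsph, _, _, hhemi⟩ := hS
  have h3 := hhemi u hu1
  have hne : {x ∈ S | 0 < ⟪x, u⟫}.Nonempty := by
    rw [Set.nonempty_iff_ne_empty]
    intro h; rw [h] at h3; simp at h3
  obtain ⟨q, hqS, hqu⟩ := hne
  have hq1 : ‖q‖ = 1 := hSsph hqS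
  set c := ⟪p, q⟫ with hc
  have hpq : p ≠ q := by
    intro h; rw [← h] at hqu; rw [hpu] at hqu; exact lt_irrefl _ hqu
  have hclt : c < 1 := (inner_lt_one_iff_real_of_norm_eq_one hp1 hq1).2 hpq
  have hcgt : -1 < c := by
    have hnp : ‖(-p : E3)‖ = 1 := by rwa [norm_neg]
    have hne2 : (-p : E3) ≠ q := by
      intro h
      rw [← h, inner_neg_left, hpu, neg_zero] at hqu
      exact lt_irrefl _ hqu
    have := (inner_lt_one_iff_real_of_norm_eq_one hnp hq1).2 hne2
    rw [inner_neg_left] at this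
    linarith
  set t := Real.arccos c with ht
  have ht0 : 0 < t := Real.arccos_pos.2 hclt
  have htpi : t < π := by
    have h1 : -(π/2) < Real.arcsin c := Real.neg_pi_div_two_lt_arcsin.2 hcgt
    rw [ht, Real.arccos]; linarith
  have hcost : Real.cos t = c := Real.cos_arccos hcgt.le hclt.le
  have hsint : 0 < Real.sin t := Real.sin_pos_of_pos_of_lt_pi ht0 htpi
  set w : E3 := q - c • p with hw
  have hpw : ⟪p, w⟫ = 0 := by
    rw [hw, inner_sub_right, real_inner_smul_right, real_inner_self_eq_norm_mul_norm, hp1, ← hc]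
    ring
  have hnw : ‖w‖ = Real.sin t := by
    have hsq : ‖w‖ ^ 2 = 1 - c ^ 2 := by
      have : ⟪w, w⟫ = 1 - c ^ 2 := by
        rw [hw, inner_sub_left, inner_sub_right, inner_sub_right, real_inner_smul_left,
          real_inner_smul_left, real_inner_smul_right, real_inner_smul_right,
          real_inner_self_eq_norm_mul_norm, real_inner_self_eq_norm_mul_norm, hp1, hq1]
        have hqp : ⟪q, p⟫ = c := by rw [real_inner_comm]
        rw [hqp]; ring
      rw [← real_inner_self_eq_norm_sq, this]
    have hs : Real.sin t = Real.sqrt (1 - c ^ 2) := by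
      rw [ht, Real.sin_arccos]
    rw [hs, ← hsq, Real.sqrt_sq (norm_nonneg _)]
  refine ⟨(Real.sin t)⁻¹ • w, ⟨?_, ?_⟩, ?_, t, ⟨ht0, htpi⟩, ?_⟩
  · rw [norm_smul, hnw, norm_inv, Real.norm_eq_abs, abs_of_pos hsint,
      inv_mul_cancel₀ hsint.ne']
  · rw [inner_smul_right, hpw, mul_zero]
  · rw [inner_smul_right]
    have huw : ⟪u, w⟫ = ⟪q, u⟫ := by
      have hup : ⟪u, p⟫ = 0 := by rw [real_inner_comm]; exact hpu
      rw [hw, inner_sub_right, real_inner_smul_right, hup, real_inner_comm u q]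
      ring
    rw [huw]
    positivity
  · have : geo p ((Real.sin t)⁻¹ • w) t = q := by
      rw [geo, smul_smul, mul_inv_cancel₀ hsint.ne', one_smul, hcost, hw]
      abel
    rw [this]; exact hqS
end
end
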